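/- Let p₁, ..., p_n be the minimal primes of Ass_R(N/IN). Then the minimal primes of Ass_R(N/(p₁⋯p_n)N) equal the union over i of the minimal primes of Ass_R(N/p_i N), and this union equals {p₁, ..., p_n}. -/

import Mathlib

open Ideal

/-- The set of minimal associated primes of an `R`-module `M`. -/
def mAss (R : Type*) [CommRing R] (M : Type*) [AddCommGroup M] [Module R M] : Set (Ideal R) :=
  {p | Minimal (· ∈ associatedPrimes R M) p}

/-- The `n`-th symbolic power of `I` with respect to `N`:
elements `x ∈ N` with `s • x ∈ I ^ n • N` for some `s` outside every minimal prime of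
`Ass_R (N / I N)`. -/
def symbPow (R : Type*) [CommRing R] (I : Ideal R) (N : Type*) [AddCommGroup N] [Module R N]
    (n : ℕ) : Set N :=
  {x | ∃ s : R, (∀ p ∈ mAss R (N ⧸ (I • ⊤ : Submodule R N)), s ∉ p) ∧
    s • x ∈ (I ^ n • ⊤ : Submodule R N)}

/-- The `I`-symbolic topology on `N` is equivalent to the `I`-adic topology on `N`. -/
def symbEquivAdic (R : Type*) [CommRing R] (I : Ideal R) (N : Type*) [AddCommGroup N]
    [Module R N] : Prop :=
  ∀ n : ℕ, ∃ m : ℕ, symbPow R I N m ⊆ (I ^ n • ⊤ : Submodule R N)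

section Aux

variable {R : Type*} [CommRing R] {N : Type*} [AddCommGroup N] [Module R N]

/-- An ideal that kills the quotient `N ⧸ J • ⊤` elementwise. -/
lemma aux_le_annihilator_quot (J : Ideal R) :
    J ≤ Module.annihilator R (N ⧸ (J • ⊤ : Submodule R N)) := by
  intro a ha
  rw [Module.mem_annihilator]
  intro m
  obtain ⟨x, rfl⟩ := Submodule.Quotient.mk_surjective _ m
  rw [← Submodule.Quotient.mk_smul, Submodule.Quotient.mk_eq_zero]
  exact Submodule.smul_mem_smul ha Submodule.mem_top

lemma aux_ann_le_annihilator_quot (J : Ideal R) :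
    Module.annihilator R N ≤ Module.annihilator R (N ⧸ (J • ⊤ : Submodule R N)) := by
  intro a ha
  rw [Module.mem_annihilator] at ha ⊢
  intro m
  obtain ⟨x, rfl⟩ := Submodule.Quotient.mk_surjective _ m
  rw [← Submodule.Quotient.mk_smul, ha, Submodule.Quotient.mk_zero]

/-- Nakayama-type: if `ann N ≤ p` and `J ≤ p` then `ann (N ⧸ J N) ≤ p`. -/
lemma aux_annihilator_quot_le [Module.Finite R N] (J p : Ideal R) [p.IsPrime]
    (hJ : J ≤ p) (hann : Module.annihilator R N ≤ p) :
    Module.annihilator R (N ⧸ (J • ⊤ : Submodule R N)) ≤ p := by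
  intro b hb
  by_contra hbp
  have hr : LinearMap.range (algebraMap R (Module.End R N) b) ≤ (p • ⊤ : Submodule R N) := by
    rintro _ ⟨x, rfl⟩
    have : b • (Submodule.Quotient.mk x : N ⧸ (J • ⊤ : Submodule R N)) = 0 :=
      Module.mem_annihilator.mp hb _
    rw [← Submodule.Quotient.mk_smul, Submodule.Quotient.mk_eq_zero] at this
    have : b • x ∈ (p • ⊤ : Submodule R N) := Submodule.smul_mono_left hJ this
    simpa [Module.algebraMap_end_apply] using this
  obtain ⟨q, hq, -, hcoeff, heval⟩ :=
    LinearMap.exists_monic_and_natDegree_eq_and_coeff_mem_pow_and_aeval_eq_zero R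
      (algebraMap R (Module.End R N) b) p hr
  -- aeval at an algebraMap element is algebraMap of eval
  have heval' : algebraMap R (Module.End R N) (q.eval b) = 0 := by
    rw [← Polynomial.aeval_algebraMap_apply_eq_algebraMap_eval]
    exact heval
  have hevp : q.eval b ∈ Module.annihilator R N := by
    rw [Module.mem_annihilator]
    intro m
    have := congrArg (fun f : Module.End R N => f m) heval'
    simpa [Module.algebraMap_end_apply] using this
  have hevalp : q.eval b ∈ p := hann hevp
  -- q.eval b = b ^ natDegree + (sum of terms in p)
  have hsum : q.eval b - b ^ q.natDegree ∈ p := by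
    rw [Polynomial.eval_eq_sum_range' (lt_add_one _)]
    rw [Finset.sum_range_succ]
    rw [hq.coeff_natDegree, one_mul, add_sub_cancel_right]
    exact Ideal.sum_mem _ fun k hk => Ideal.mul_mem_right _ _ <|
      Ideal.pow_le_self (Nat.sub_ne_zero_of_lt (Finset.mem_range.mp hk)) (hcoeff k)
  have : b ^ q.natDegree ∈ p := by
    have := Ideal.sub_mem p hevalp hsum
    simpa using this
  exact hbp (‹p.IsPrime›.mem_of_pow_mem _ this)

/-- Key lemma: under suitable hypotheses `p` is an associated prime of `N ⧸ J N`. -/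
lemma aux_mem_ass [Module.Finite R N] (J p : Ideal R) [hp : p.IsPrime]
    (hJ : J ≤ p) (hann : Module.annihilator R N ≤ p)
    (s₀ : R) (hs₀ : s₀ ∉ p) (hmul : ∀ a ∈ p, s₀ * a ∈ J) :
    p ∈ associatedPrimes R (N ⧸ (J • ⊤ : Submodule R N)) := by
  have hq : Module.annihilator R (N ⧸ (J • ⊤ : Submodule R N)) ≤ p :=
    aux_annihilator_quot_le J p hJ hann
  have hsupp : (⟨p, hp⟩ : PrimeSpectrum R) ∈ Module.support R (N ⧸ (J • ⊤ : Submodule R N)) :=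
    Module.mem_support_iff_of_finite.mpr hq
  obtain ⟨x₀, hx₀⟩ := Module.mem_support_iff'.mp hsupp
  refine ⟨hp, s₀ • x₀, ?_⟩
  apply le_antisymm
  · intro a ha
    apply Ideal.le_radical
    rw [Submodule.mem_colon_singleton, Submodule.mem_bot]
    rw [smul_smul, mul_comm]
    have : s₀ * a ∈ Module.annihilator R (N ⧸ (J • ⊤ : Submodule R N)) :=
      aux_le_annihilator_quot J (hmul a ha)
    exact Module.mem_annihilator.mp this _
  · intro b hb
    obtain ⟨n, hb⟩ := hb
    rw [Submodule.mem_colon_singleton, Submodule.mem_bot] at hb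
    by_contra hbp
    have : (b ^ n * s₀) • x₀ ≠ 0 := hx₀ _ fun hc =>
      (hp.mem_or_mem hc).elim (fun h => hbp (hp.mem_of_pow_mem n h)) hs₀
    exact this (by rw [mul_smul]; exact hb)

end Aux

theorem stmt3 (R : Type*) [CommRing R] [IsNoetherianRing R] (I : Ideal R)
    (N : Type*) [AddCommGroup N] [Module R N] [Module.Finite R N] [Nontrivial N]
    (hI : (I • ⊤ : Submodule R N) ≠ ⊤)
    (ps : Finset (Ideal R))
    (h : mAss R (N ⧸ (I • ⊤ : Submodule R N)) = ↑ps) :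
    mAss R (N ⧸ ((∏ p ∈ ps, p) • ⊤ : Submodule R N)) =
      (⋃ p ∈ ps, mAss R (N ⧸ (p • ⊤ : Submodule R N))) ∧
    (⋃ p ∈ ps, mAss R (N ⧸ (p • ⊤ : Submodule R N))) = ↑ps := by
  classical
  have hmem : ∀ p ∈ ps, Minimal (· ∈ associatedPrimes R (N ⧸ (I • ⊤ : Submodule R N))) p := by
    intro p hp
    rw [← Finset.mem_coe, ← h] at hp
    exact hp
  have hprime : ∀ p ∈ ps, p.IsPrime := fun p hp =>
    (AssociatedPrimes.mem_iff.mp (hmem p hp).1).isPrime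
  have hannN : ∀ p ∈ ps, Module.annihilator R N ≤ p := by
    intro p hp
    refine (aux_ann_le_annihilator_quot I).trans ?_
    rw [← Submodule.annihilator_top]
    exact (AssociatedPrimes.mem_iff.mp (hmem p hp).1).annihilator_le
  have hinc : ∀ p ∈ ps, ∀ q ∈ ps, q ≤ p → q = p := fun p hp q hq hle =>
    le_antisymm hle ((hmem p hp).2 (hmem q hq).1 hle)
  have hJle : ∀ p ∈ ps, (∏ q ∈ ps, q) ≤ p := by
    intro p hp
    rw [← Finset.mul_prod_erase _ _ hp]
    exact Ideal.mul_le_left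
  have hs0 : ∀ p ∈ ps, ∃ s₀ ∉ p, ∀ a ∈ p, s₀ * a ∈ ∏ q ∈ ps, q := by
    intro p hp
    haveI := hprime p hp
    have hc : ∀ q : {x // x ∈ ps.erase p}, ∃ c, c ∈ (q : Ideal R) ∧ c ∉ p := by
      rintro ⟨q, hq⟩
      have hne : q ≠ p := Finset.ne_of_mem_erase hq
      have hqps : q ∈ ps := Finset.mem_of_mem_erase hq
      by_contra hcon
      push_neg at hcon
      exact hne (hinc p hp q hqps hcon)
    choose c hc1 hc2 using hc
    refine ⟨∏ q ∈ (ps.erase p).attach, c q, ?_, ?_⟩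
    · exact Submonoid.prod_mem p.primeCompl fun q _ => hc2 q
    · intro a ha
      have h1 : (∏ q ∈ (ps.erase p).attach, c q) ∈ ∏ q ∈ (ps.erase p).attach, (q : Ideal R) :=
        Ideal.prod_mem_prod fun q _ => hc1 q
      rw [Finset.prod_attach (ps.erase p) (fun q => q)] at h1
      have h2 := Ideal.mul_mem_mul h1 ha
      rwa [mul_comm, Finset.mul_prod_erase ps (fun q : Ideal R => q) hp] at h2
  have hassJ : ∀ p ∈ ps, p ∈ associatedPrimes R (N ⧸ ((∏ q ∈ ps, q) • ⊤ : Submodule R N)) := by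
    intro p hp
    haveI := hprime p hp
    obtain ⟨s₀, hs₀, hmul⟩ := hs0 p hp
    exact aux_mem_ass _ p (hJle p hp) (hannN p hp) s₀ hs₀ hmul
  have hcontain : ∀ r ∈ associatedPrimes R (N ⧸ ((∏ q ∈ ps, q) • ⊤ : Submodule R N)),
      ∃ p ∈ ps, p ≤ r := by
    intro r hr
    have hr' := AssociatedPrimes.mem_iff.mp hr
    have hle : (∏ q ∈ ps, q) ≤ r := by
      refine (aux_le_annihilator_quot (N := N) (∏ q ∈ ps, q)).trans ?_
      rw [← Submodule.annihilator_top]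
      exact hr'.annihilator_le
    exact (Ideal.IsPrime.prod_le hr'.isPrime).mp hle
  have hsingle : ∀ p ∈ ps, mAss R (N ⧸ (p • ⊤ : Submodule R N)) = {p} := by
    intro p hp
    haveI := hprime p hp
    have hass : p ∈ associatedPrimes R (N ⧸ (p • ⊤ : Submodule R N)) :=
      aux_mem_ass p p le_rfl (hannN p hp) 1
        (fun h1 => (hprime p hp).ne_top ((Ideal.eq_top_iff_one p).mpr h1))
        (fun a ha => by rwa [one_mul])
    have hlow : ∀ r ∈ associatedPrimes R (N ⧸ (p • ⊤ : Submodule R N)), p ≤ r := by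
      intro r hr
      refine (aux_le_annihilator_quot (N := N) p).trans ?_
      rw [← Submodule.annihilator_top]
      exact (AssociatedPrimes.mem_iff.mp hr).annihilator_le
    ext r
    simp only [mAss, Set.mem_setOf_eq, Set.mem_singleton_iff]
    constructor
    · intro hr
      exact le_antisymm (hr.2 hass (hlow r hr.1)) (hlow r hr.1)
    · rintro rfl
      exact ⟨hass, fun y hy _ => hlow y hy⟩
  have hmain : mAss R (N ⧸ ((∏ p ∈ ps, p) • ⊤ : Submodule R N)) = ↑ps := by
    ext r
    simp only [mAss, Set.mem_setOf_eq, Finset.mem_coe]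
    constructor
    · intro hr
      obtain ⟨p, hp, hpr⟩ := hcontain r hr.1
      have : r = p := le_antisymm (hr.2 (hassJ p hp) hpr) hpr
      exact this ▸ hp
    · intro hp
      refine ⟨hassJ r hp, fun y hy hyr => ?_⟩
      obtain ⟨p, hp', hpy⟩ := hcontain y hy
      have : p = r := hinc r hp p hp' (hpy.trans hyr)
      exact this ▸ hpy
  have hunion : (⋃ p ∈ ps, mAss R (N ⧸ (p • ⊤ : Submodule R N))) = ↑ps := by
    ext r
    simp only [Set.mem_iUnion, Finset.mem_coe, exists_prop]
    constructor
    · rintro ⟨p, hp, hr⟩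
      rw [hsingle p hp, Set.mem_singleton_iff] at hr
      exact hr ▸ hp
    · intro hp
      exact ⟨r, hp, by rw [hsingle r hp]; exact Set.mem_singleton r⟩
  exact ⟨hmain.trans hunion.symm, hunion⟩
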